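/- For independent real-valued random variables X and Y with E|X| < ∞ and E|Y| < ∞, the energy distance 2E|X-Y| - E|X-X'| - E|Y-Y'| is nonnegative, where X', Y' are independent copies of X, Y respectively. -/

import Mathlib

open MeasureTheory ProbabilityTheory

namespace EnergyAux

/-- The "between" set used for the layer-cake representation of `|x - y|`. -/
def S : Set ((ℝ × ℝ) × ℝ) := {q | min q.1.1 q.1.2 ≤ q.2 ∧ q.2 < max q.1.1 q.1.2}

lemma measurableSet_S : MeasurableSet S := by
  apply MeasurableSet.inter
  · exact measurableSet_le ((measurable_fst.comp measurable_fst).min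
      (measurable_snd.comp measurable_fst)) measurable_snd
  · exact measurableSet_lt measurable_snd ((measurable_fst.comp measurable_fst).max
      (measurable_snd.comp measurable_fst))

lemma ofReal_abs_eq (x y : ℝ) :
    ENNReal.ofReal |x - y| = ∫⁻ t, S.indicator 1 ((x, y), t) := by
  have h : (fun t => S.indicator (1 : (ℝ × ℝ) × ℝ → ENNReal) ((x, y), t))
      = (Set.Ico (min x y) (max x y)).indicator 1 := by
    ext t
    by_cases h : ((x, y), t) ∈ S
    · rw [Set.indicator_of_mem h, Set.indicator_of_mem (show t ∈ Set.Ico _ _ from h)]; rfl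
    · rw [Set.indicator_of_notMem h, Set.indicator_of_notMem (show t ∉ Set.Ico _ _ from h)]
  rw [h, lintegral_indicator_one measurableSet_Ico, Real.volume_Ico,
    max_sub_min_eq_abs, abs_sub_comm]

lemma slice_eq (t : ℝ) :
    {p : ℝ × ℝ | ((p, t) : (ℝ × ℝ) × ℝ) ∈ S}
      = (Set.Iic t ×ˢ Set.Ioi t) ∪ (Set.Ioi t ×ˢ Set.Iic t) := by
  ext ⟨x, y⟩
  simp only [S, Set.mem_setOf_eq, Set.mem_union, Set.mem_prod, Set.mem_Iic, Set.mem_Ioi,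
    min_le_iff, lt_max_iff]
  constructor
  · rintro ⟨h1 | h1, h2 | h2⟩
    · linarith
    · exact Or.inl ⟨h1, h2⟩
    · exact Or.inr ⟨h2, h1⟩
    · linarith
  · rintro (⟨h1, h2⟩ | ⟨h1, h2⟩)
    · exact ⟨Or.inl h1, Or.inr h2⟩
    · exact ⟨Or.inr h2, Or.inl h1⟩

/-- Key identity: `∫∫ |x-y| d(ν×ρ) = ∫ (F(t)(1-G(t)) + (1-F(t))G(t)) dt`. -/
lemma key (ν ρ : Measure ℝ) [IsProbabilityMeasure ν] [IsProbabilityMeasure ρ] :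
    ∫⁻ p : ℝ × ℝ, ENNReal.ofReal |p.1 - p.2| ∂(ν.prod ρ)
      = ∫⁻ t, ν (Set.Iic t) * ρ (Set.Ioi t) + ν (Set.Ioi t) * ρ (Set.Iic t) := by
  have h1 : ∫⁻ p : ℝ × ℝ, ENNReal.ofReal |p.1 - p.2| ∂(ν.prod ρ)
      = ∫⁻ p : ℝ × ℝ, ∫⁻ t, S.indicator 1 (p, t) ∂(volume) ∂(ν.prod ρ) := by
    refine lintegral_congr fun p => ?_
    exact ofReal_abs_eq p.1 p.2
  rw [h1, lintegral_lintegral_swap]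
  · refine lintegral_congr fun t => ?_
    have h2 : (fun p : ℝ × ℝ => S.indicator (1 : (ℝ × ℝ) × ℝ → ENNReal) (p, t))
        = ({p : ℝ × ℝ | ((p, t) : (ℝ × ℝ) × ℝ) ∈ S}).indicator 1 := by
      ext p
      by_cases h : (p, t) ∈ S <;>
        simp [Set.indicator_apply, h, Set.mem_setOf_eq]
    rw [h2, lintegral_indicator_one, slice_eq, measure_union, Measure.prod_prod,
      Measure.prod_prod]
    · exact Set.disjoint_left.mpr (by rintro ⟨x, y⟩ ⟨hx, _⟩ ⟨hx', _⟩; exact absurd (Set.mem_Iic.mp hx) (not_le.mpr (Set.mem_Ioi.mp hx')))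
    · exact measurableSet_Ioi.prod measurableSet_Iic
    · rw [slice_eq]
      exact (measurableSet_Iic.prod measurableSet_Ioi).union
        (measurableSet_Ioi.prod measurableSet_Iic)
  · exact (measurable_one.indicator measurableSet_S).comp
      ((measurable_fst.prodMk measurable_snd)) |>.aemeasurable

lemma add_halves_le (ν ρ : Measure ℝ) [IsProbabilityMeasure ν] [IsProbabilityMeasure ρ] (t : ℝ) :
    (ν (Set.Iic t) * ν (Set.Ioi t) + ν (Set.Ioi t) * ν (Set.Iic t))
      + (ρ (Set.Iic t) * ρ (Set.Ioi t) + ρ (Set.Ioi t) * ρ (Set.Iic t))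
      ≤ 2 * (ν (Set.Iic t) * ρ (Set.Ioi t) + ν (Set.Ioi t) * ρ (Set.Iic t)) := by
  have hsum : ∀ (κ : Measure ℝ) [IsProbabilityMeasure κ],
      κ (Set.Iic t) + κ (Set.Ioi t) = 1 := by
    intro κ _
    rw [← measure_union (Set.Iic_disjoint_Ioi le_rfl) measurableSet_Ioi,
      Set.Iic_union_Ioi, measure_univ]
  set a := (ν (Set.Iic t)).toReal with ha
  set a' := (ν (Set.Ioi t)).toReal with ha'
  set b := (ρ (Set.Iic t)).toReal with hb
  set b' := (ρ (Set.Ioi t)).toReal with hb'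
  have hfin : ∀ (κ : Measure ℝ) [IsProbabilityMeasure κ] (s : Set ℝ), κ s ≠ ⊤ :=
    fun κ _ s => measure_ne_top κ s
  have haa : a + a' = 1 := by
    rw [ha, ha', ← ENNReal.toReal_add (hfin ν _) (hfin ν _), hsum ν]; simp
  have hbb : b + b' = 1 := by
    rw [hb, hb', ← ENNReal.toReal_add (hfin ρ _) (hfin ρ _), hsum ρ]; simp
  have h0a : 0 ≤ a := ENNReal.toReal_nonneg
  have h0a' : 0 ≤ a' := ENNReal.toReal_nonneg
  have h0b : 0 ≤ b := ENNReal.toReal_nonneg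
  have h0b' : 0 ≤ b' := ENNReal.toReal_nonneg
  have hreal : (a * a' + a' * a) + (b * b' + b' * b) ≤ 2 * (a * b' + a' * b) := by
    nlinarith [sq_nonneg (a - b)]
  have hL : ((ν (Set.Iic t) * ν (Set.Ioi t) + ν (Set.Ioi t) * ν (Set.Iic t))
      + (ρ (Set.Iic t) * ρ (Set.Ioi t) + ρ (Set.Ioi t) * ρ (Set.Iic t))) ≠ ⊤ := by
    finiteness
  have hR : (2 * (ν (Set.Iic t) * ρ (Set.Ioi t) + ν (Set.Ioi t) * ρ (Set.Iic t))) ≠ ⊤ := by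
    finiteness
  rw [← ENNReal.toReal_le_toReal hL hR]
  rw [ENNReal.toReal_add (by finiteness) (by finiteness), ENNReal.toReal_mul,
    ENNReal.toReal_add (by finiteness) (by finiteness),
    ENNReal.toReal_add (by finiteness) (by finiteness),
    ENNReal.toReal_add (by finiteness) (by finiteness)]
  simp only [ENNReal.toReal_mul, ENNReal.toReal_ofNat]
  exact hreal

lemma measurable_cdf (κ : Measure ℝ) : Measurable (fun t => κ (Set.Iic t)) := by
  have : Monotone (fun t => κ (Set.Iic t)) := fun s t hst => measure_mono (Set.Iic_subset_Iic.mpr hst)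
  exact this.measurable

lemma measurable_tail (κ : Measure ℝ) : Measurable (fun t => κ (Set.Ioi t)) := by
  have : Antitone (fun t => κ (Set.Ioi t)) := fun s t hst => measure_mono (Set.Ioi_subset_Ioi hst)
  exact this.measurable

end EnergyAux

/-- Nonnegativity of the energy distance: for independent integrable real random
variables `X, Y` with independent copies `X', Y'`,
`2E|X-Y| - E|X-X'| - E|Y-Y'| ≥ 0`. -/
theorem energy_distance_nonneg
    {Ω : Type*} [MeasurableSpace Ω] {μ : Measure Ω} [IsProbabilityMeasure μ]
    (X Y X' Y' : Ω → ℝ)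
    (hIndep : iIndepFun ![X, Y, X', Y'] μ)
    (hX' : IdentDistrib X' X μ μ) (hY' : IdentDistrib Y' Y μ μ)
    (hX1 : Integrable X μ) (hY1 : Integrable Y μ) :
    0 ≤ 2 * ∫ ω, |X ω - Y ω| ∂μ - ∫ ω, |X ω - X' ω| ∂μ
        - ∫ ω, |Y ω - Y' ω| ∂μ := by
  classical
  have hX'1 : Integrable X' μ := hX'.integrable_iff.mpr hX1
  have hY'1 : Integrable Y' μ := hY'.integrable_iff.mpr hY1
  have hXm : AEMeasurable X μ := hX1.aemeasurable
  have hYm : AEMeasurable Y μ := hY1.aemeasurable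
  have hX'm : AEMeasurable X' μ := hX'.aemeasurable_fst
  have hY'm : AEMeasurable Y' μ := hY'.aemeasurable_fst
  set ν : Measure ℝ := μ.map X with hν
  set ρ : Measure ℝ := μ.map Y with hρ
  have hmapX' : μ.map X' = ν := hX'.map_eq
  have hmapY' : μ.map Y' = ρ := hY'.map_eq
  haveI : IsProbabilityMeasure ν := Measure.isProbabilityMeasure_map hXm
  haveI : IsProbabilityMeasure ρ := Measure.isProbabilityMeasure_map hYm
  -- independence of the three pairs
  have hXY : IndepFun X Y μ := hIndep.indepFun (show (0 : Fin 4) ≠ 1 by decide)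
  have hXX' : IndepFun X X' μ := hIndep.indepFun (show (0 : Fin 4) ≠ 2 by decide)
  have hYY' : IndepFun Y Y' μ := hIndep.indepFun (show (1 : Fin 4) ≠ 3 by decide)
  -- general lemma for a pair
  have pairEq : ∀ (A B : Ω → ℝ), AEMeasurable A μ → AEMeasurable B μ →
      IndepFun A B μ →
      ∫⁻ ω, ENNReal.ofReal |A ω - B ω| ∂μ
        = ∫⁻ p : ℝ × ℝ, ENNReal.ofReal |p.1 - p.2| ∂((μ.map A).prod (μ.map B)) := by
    intro A B hA hB hAB
    haveI : IsProbabilityMeasure (μ.map A) := Measure.isProbabilityMeasure_map hA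
    haveI : IsProbabilityMeasure (μ.map B) := Measure.isProbabilityMeasure_map hB
    have hprod : μ.map (fun ω => (A ω, B ω)) = (μ.map A).prod (μ.map B) :=
      (indepFun_iff_map_prod_eq_prod_map_map hA hB).mp hAB
    rw [← hprod, lintegral_map']
    · exact (measurable_fst.sub measurable_snd).abs.ennreal_ofReal.aemeasurable
    · exact hA.prodMk hB
  have T1eq : ∫⁻ ω, ENNReal.ofReal |X ω - Y ω| ∂μ
      = ∫⁻ t, ν (Set.Iic t) * ρ (Set.Ioi t) + ν (Set.Ioi t) * ρ (Set.Iic t) := by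
    rw [pairEq X Y hXm hYm hXY, ← hν, ← hρ, EnergyAux.key]
  have T2eq : ∫⁻ ω, ENNReal.ofReal |X ω - X' ω| ∂μ
      = ∫⁻ t, ν (Set.Iic t) * ν (Set.Ioi t) + ν (Set.Ioi t) * ν (Set.Iic t) := by
    rw [pairEq X X' hXm hX'm hXX', hmapX', ← hν, EnergyAux.key]
  have T3eq : ∫⁻ ω, ENNReal.ofReal |Y ω - Y' ω| ∂μ
      = ∫⁻ t, ρ (Set.Iic t) * ρ (Set.Ioi t) + ρ (Set.Ioi t) * ρ (Set.Iic t) := by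
    rw [pairEq Y Y' hYm hY'm hYY', hmapY', ← hρ, EnergyAux.key]
  -- measurability of the integrands in t
  have mV : Measurable (fun t => ν (Set.Iic t) * ν (Set.Ioi t) + ν (Set.Ioi t) * ν (Set.Iic t)) :=
    (((EnergyAux.measurable_cdf ν).mul (EnergyAux.measurable_tail ν)).add
      ((EnergyAux.measurable_tail ν).mul (EnergyAux.measurable_cdf ν)))
  have mR : Measurable (fun t => ρ (Set.Iic t) * ρ (Set.Ioi t) + ρ (Set.Ioi t) * ρ (Set.Iic t)) :=
    (((EnergyAux.measurable_cdf ρ).mul (EnergyAux.measurable_tail ρ)).add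
      ((EnergyAux.measurable_tail ρ).mul (EnergyAux.measurable_cdf ρ)))
  -- the lintegral inequality
  have hlin : ∫⁻ ω, ENNReal.ofReal |X ω - X' ω| ∂μ + ∫⁻ ω, ENNReal.ofReal |Y ω - Y' ω| ∂μ
      ≤ 2 * ∫⁻ ω, ENNReal.ofReal |X ω - Y ω| ∂μ := by
    rw [T1eq, T2eq, T3eq, ← lintegral_const_mul 2 (by
        exact ((EnergyAux.measurable_cdf ν).mul (EnergyAux.measurable_tail ρ)).add
          ((EnergyAux.measurable_tail ν).mul (EnergyAux.measurable_cdf ρ))),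
      ← lintegral_add_left mV]
    exact lintegral_mono fun t => EnergyAux.add_halves_le ν ρ t
  -- finiteness of T1
  have hT1fin : ∫⁻ ω, ENNReal.ofReal |X ω - Y ω| ∂μ ≠ ⊤ := by
    have hInt : Integrable (fun ω => X ω - Y ω) μ := hX1.sub hY1
    have := hInt.hasFiniteIntegral
    rw [HasFiniteIntegral] at this
    refine ne_of_lt (lt_of_le_of_lt (le_of_eq ?_) this)
    refine lintegral_congr fun ω => ?_
    rw [← Real.norm_eq_abs, ofReal_norm]
  have hT2fin : ∫⁻ ω, ENNReal.ofReal |X ω - X' ω| ∂μ ≠ ⊤ := by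
    refine ne_of_lt (lt_of_le_of_lt (le_trans (le_add_right le_rfl) hlin) ?_)
    exact (ENNReal.mul_ne_top (by simp) hT1fin).lt_top
  have hT3fin : ∫⁻ ω, ENNReal.ofReal |Y ω - Y' ω| ∂μ ≠ ⊤ := by
    refine ne_of_lt (lt_of_le_of_lt (le_trans (le_add_left le_rfl) hlin) ?_)
    exact (ENNReal.mul_ne_top (by simp) hT1fin).lt_top
  have e1 : ∫ ω, |X ω - Y ω| ∂μ = (∫⁻ ω, ENNReal.ofReal |X ω - Y ω| ∂μ).toReal :=
    integral_eq_lintegral_of_nonneg_ae (Filter.Eventually.of_forall fun ω => abs_nonneg _)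
      ((measurable_abs.comp_aemeasurable (hXm.sub hYm)).aestronglyMeasurable)
  have e2 : ∫ ω, |X ω - X' ω| ∂μ = (∫⁻ ω, ENNReal.ofReal |X ω - X' ω| ∂μ).toReal :=
    integral_eq_lintegral_of_nonneg_ae (Filter.Eventually.of_forall fun ω => abs_nonneg _)
      ((measurable_abs.comp_aemeasurable (hXm.sub hX'm)).aestronglyMeasurable)
  have e3 : ∫ ω, |Y ω - Y' ω| ∂μ = (∫⁻ ω, ENNReal.ofReal |Y ω - Y' ω| ∂μ).toReal :=
    integral_eq_lintegral_of_nonneg_ae (Filter.Eventually.of_forall fun ω => abs_nonneg _)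
      ((measurable_abs.comp_aemeasurable (hYm.sub hY'm)).aestronglyMeasurable)
  rw [e1, e2, e3]
  have hsum : (∫⁻ ω, ENNReal.ofReal |X ω - X' ω| ∂μ).toReal
      + (∫⁻ ω, ENNReal.ofReal |Y ω - Y' ω| ∂μ).toReal
      = ((∫⁻ ω, ENNReal.ofReal |X ω - X' ω| ∂μ)
        + (∫⁻ ω, ENNReal.ofReal |Y ω - Y' ω| ∂μ)).toReal :=
    (ENNReal.toReal_add hT2fin hT3fin).symm
  have hmono : ((∫⁻ ω, ENNReal.ofReal |X ω - X' ω| ∂μ)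
        + (∫⁻ ω, ENNReal.ofReal |Y ω - Y' ω| ∂μ)).toReal
      ≤ (2 * ∫⁻ ω, ENNReal.ofReal |X ω - Y ω| ∂μ).toReal :=
    ENNReal.toReal_mono (ENNReal.mul_ne_top (by simp) hT1fin) hlin
  rw [ENNReal.toReal_mul, ENNReal.toReal_ofNat] at hmono
  linarith [hsum ▸ hmono]
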